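/- The number of permutations of {1,...,n} avoiding the pattern 132 equals the Catalan number C_n. -/

import Mathlib

/-- A permutation avoids the pattern 132 if there are no positions
`i < j < k` with `π i < π k < π j`. -/
def Avoids132 {n : ℕ} (π : Equiv.Perm (Fin n)) : Prop :=
  ¬ ∃ i j k : Fin n, i < j ∧ j < k ∧ π i < π k ∧ π k < π j

namespace Av132

variable {n m : ℕ}

def spliceFun (hm : m ≤ n) (σ : Equiv.Perm (Fin m)) (τ : Equiv.Perm (Fin (n - m)))
    (p : Fin (n + 1)) : Fin (n + 1) :=
  if h : (p : ℕ) < m then ⟨(σ ⟨p, h⟩ : ℕ) + (n - m), by have := (σ ⟨p, h⟩).isLt; omega⟩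
  else if h2 : (p : ℕ) = m then ⟨n, by omega⟩
  else
    have hb : (p : ℕ) - (m + 1) < n - m := by have := p.isLt; omega
    ⟨(τ ⟨(p : ℕ) - (m + 1), hb⟩ : ℕ), by have := (τ ⟨(p : ℕ) - (m + 1), hb⟩).isLt; omega⟩

def spliceInv (hm : m ≤ n) (σ : Equiv.Perm (Fin m)) (τ : Equiv.Perm (Fin (n - m)))
    (v : Fin (n + 1)) : Fin (n + 1) :=
  if h : (v : ℕ) < n - m then
    ⟨m + 1 + (τ.symm ⟨v, h⟩ : ℕ), by have := (τ.symm ⟨v, h⟩).isLt; omega⟩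
  else if h2 : (v : ℕ) = n then ⟨m, by omega⟩
  else
    have hb : (v : ℕ) - (n - m) < m := by have := v.isLt; omega
    ⟨(σ.symm ⟨(v : ℕ) - (n - m), hb⟩ : ℕ), by have := (σ.symm ⟨(v : ℕ) - (n - m), hb⟩).isLt; omega⟩

def splicePerm (hm : m ≤ n) (σ : Equiv.Perm (Fin m)) (τ : Equiv.Perm (Fin (n - m))) :
    Equiv.Perm (Fin (n + 1)) where
  toFun := spliceFun hm σ τ
  invFun := spliceInv hm σ τ
  left_inv := by
    intro p
    unfold spliceFun spliceInv
    by_cases h : (p : ℕ) < m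
    · simp only [dif_pos h]
      have h1 : ¬ ((σ ⟨p, h⟩ : ℕ) + (n - m) < n - m) := by omega
      have h2 : ¬ ((σ ⟨p, h⟩ : ℕ) + (n - m) = n) := by have := (σ ⟨p, h⟩).isLt; omega
      simp only [dif_neg h1, dif_neg h2, Nat.add_sub_cancel, Fin.eta, Equiv.symm_apply_apply]
    · by_cases h2 : (p : ℕ) = m
      · simp only [dif_neg h, dif_pos h2]
        have h1 : ¬ ((n : ℕ) < n - m) := by omega
        simp only [dif_neg h1, dif_pos rfl]
        exact Fin.ext h2.symm
      · simp only [dif_neg h, dif_neg h2]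
        have hb : (p : ℕ) - (m + 1) < n - m := by have := p.isLt; omega
        have h1 : ((τ ⟨(p : ℕ) - (m + 1), hb⟩ : ℕ)) < n - m := (τ _).isLt
        simp only [dif_pos h1, Fin.eta, Equiv.symm_apply_apply]
        apply Fin.ext; simp; omega
  right_inv := by
    intro v
    unfold spliceFun spliceInv
    by_cases h : (v : ℕ) < n - m
    · simp only [dif_pos h]
      have h1 : ¬ ((m + 1 + (τ.symm ⟨v, h⟩ : ℕ)) < m) := by omega
      have h2 : ¬ ((m + 1 + (τ.symm ⟨v, h⟩ : ℕ)) = m) := by omega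
      simp only [dif_neg h1, dif_neg h2, Nat.add_sub_cancel_left, Fin.eta, Equiv.apply_symm_apply]
    · by_cases h2 : (v : ℕ) = n
      · simp only [dif_neg h, dif_pos h2]
        have h1 : ¬ ((m : ℕ) < m) := by omega
        simp only [dif_pos rfl, dif_neg h1]
        exact Fin.ext h2.symm
      · simp only [dif_neg h, dif_neg h2]
        have hb : (v : ℕ) - (n - m) < m := by have := v.isLt; omega
        have h1 : ((σ.symm ⟨(v : ℕ) - (n - m), hb⟩ : ℕ)) < m := (σ.symm _).isLt
        simp only [dif_pos h1, Fin.eta, Equiv.apply_symm_apply]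
        apply Fin.ext; simp; omega

lemma splice_val_lt (hm : m ≤ n) (σ : Equiv.Perm (Fin m)) (τ : Equiv.Perm (Fin (n - m)))
    (p : Fin (n + 1)) (h : (p : ℕ) < m) :
    (splicePerm hm σ τ p : ℕ) = (σ ⟨p, h⟩ : ℕ) + (n - m) := by
  show (spliceFun hm σ τ p : ℕ) = _
  unfold spliceFun; simp [h]

lemma splice_val_eq (hm : m ≤ n) (σ : Equiv.Perm (Fin m)) (τ : Equiv.Perm (Fin (n - m)))
    (p : Fin (n + 1)) (h : (p : ℕ) = m) :
    (splicePerm hm σ τ p : ℕ) = n := by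
  show (spliceFun hm σ τ p : ℕ) = _
  unfold spliceFun; simp [h]

lemma splice_val_gt (hm : m ≤ n) (σ : Equiv.Perm (Fin m)) (τ : Equiv.Perm (Fin (n - m)))
    (p : Fin (n + 1)) (h : m < (p : ℕ)) (hb : (p : ℕ) - (m + 1) < n - m) :
    (splicePerm hm σ τ p : ℕ) = (τ ⟨(p : ℕ) - (m + 1), hb⟩ : ℕ) := by
  show (spliceFun hm σ τ p : ℕ) = _
  unfold spliceFun
  have h1 : ¬ ((p : ℕ) < m) := by omega
  have h2 : ¬ ((p : ℕ) = m) := by omega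
  simp [h1, h2]

lemma splice_val_gt_lt (hm : m ≤ n) (σ : Equiv.Perm (Fin m)) (τ : Equiv.Perm (Fin (n - m)))
    (p : Fin (n + 1)) (h : m < (p : ℕ)) :
    (splicePerm hm σ τ p : ℕ) < n - m := by
  have hb : (p : ℕ) - (m + 1) < n - m := by have := p.isLt; omega
  rw [splice_val_gt hm σ τ p h hb]
  exact (τ _).isLt

lemma splice_avoids (hm : m ≤ n) (σ : Equiv.Perm (Fin m)) (τ : Equiv.Perm (Fin (n - m)))
    (hσ : Avoids132 σ) (hτ : Avoids132 τ) : Avoids132 (splicePerm hm σ τ) := by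
  rintro ⟨i, j, k, hij, hjk, h1, h2⟩
  rw [Fin.lt_def] at hij hjk h1 h2
  -- case on position of k
  rcases lt_trichotomy (k : ℕ) m with hk | hk | hk
  · -- all in left block
    have hi : (i : ℕ) < m := by omega
    have hj : (j : ℕ) < m := by omega
    rw [splice_val_lt hm σ τ i hi, splice_val_lt hm σ τ k hk] at h1
    rw [splice_val_lt hm σ τ k hk, splice_val_lt hm σ τ j hj] at h2
    exact hσ ⟨⟨i, hi⟩, ⟨j, hj⟩, ⟨k, hk⟩, by simp only [Fin.mk_lt_mk]; omega,
      by simp only [Fin.mk_lt_mk]; omega,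
      by rw [Fin.lt_def]; omega, by rw [Fin.lt_def]; omega⟩
  · -- k = m : π k = n, contradicts π k < π j
    rw [splice_val_eq hm σ τ k hk] at h2
    have := (splicePerm hm σ τ j).isLt; omega
  · rcases lt_trichotomy (j : ℕ) m with hj | hj | hj
    · -- i, j left, k right: π i ≥ n - m > π k, contradicts π i < π k
      have hi : (i : ℕ) < m := by omega
      rw [splice_val_lt hm σ τ i hi] at h1
      have := splice_val_gt_lt hm σ τ k hk
      omega
    · -- j = m: π j = n; i left, k right: π i ≥ n - m > π k
      have hi : (i : ℕ) < m := by omega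
      rw [splice_val_lt hm σ τ i hi] at h1
      have := splice_val_gt_lt hm σ τ k hk
      omega
    · rcases lt_trichotomy (i : ℕ) m with hi | hi | hi
      · rw [splice_val_lt hm σ τ i hi] at h1
        have := splice_val_gt_lt hm σ τ k hk
        omega
      · -- i = m: π i = n, contradicts π i < π k
        rw [splice_val_eq hm σ τ i hi] at h1
        have := (splicePerm hm σ τ k).isLt; omega
      · -- all right: pattern in τ
        have hbi : (i : ℕ) - (m + 1) < n - m := by have := i.isLt; omega
        have hbj : (j : ℕ) - (m + 1) < n - m := by have := j.isLt; omega
        have hbk : (k : ℕ) - (m + 1) < n - m := by have := k.isLt; omega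
        rw [splice_val_gt hm σ τ i hi hbi, splice_val_gt hm σ τ k hk hbk] at h1
        rw [splice_val_gt hm σ τ k hk hbk, splice_val_gt hm σ τ j hj hbj] at h2
        exact hτ ⟨⟨_, hbi⟩, ⟨_, hbj⟩, ⟨_, hbk⟩, by simp only [Fin.mk_lt_mk]; omega,
          by simp only [Fin.mk_lt_mk]; omega, by rw [Fin.lt_def]; exact h1,
          by rw [Fin.lt_def]; exact h2⟩

section Split

variable (π : Equiv.Perm (Fin (n + 1)))

/-- position of the maximal value `n`. -/
def maxPos : ℕ := (π.symm ⟨n, n.lt_succ_self⟩ : ℕ)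

lemma maxPos_le : maxPos π ≤ n := by
  have := (π.symm ⟨n, n.lt_succ_self⟩).isLt; unfold maxPos; omega

lemma apply_maxPos : (π ⟨maxPos π, by have := maxPos_le π; omega⟩ : ℕ) = n := by
  have : (⟨maxPos π, by have := maxPos_le π; omega⟩ : Fin (n + 1)) = π.symm ⟨n, n.lt_succ_self⟩ :=
    Fin.ext rfl
  rw [this, Equiv.apply_symm_apply]

lemma eq_maxPos_of_apply_eq (p : Fin (n + 1)) (h : (π p : ℕ) = n) : (p : ℕ) = maxPos π := by
  have : π p = ⟨n, n.lt_succ_self⟩ := Fin.ext h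
  have := congrArg (fun x => (π.symm x : ℕ)) this
  simpa [maxPos] using this

variable (hπ : Avoids132 π)
include hπ

lemma noCross (i k : Fin (n + 1)) (hi : (i : ℕ) < maxPos π) (hk : maxPos π < (k : ℕ)) :
    (π k : ℕ) < (π i : ℕ) := by
  by_contra hcon
  have hik : i ≠ k := by intro h; rw [h] at hi; omega
  have hne : (π i : ℕ) ≠ (π k : ℕ) := fun h => hik (π.injective (Fin.ext h))
  have h1 : (π i : ℕ) < (π k : ℕ) := by omega
  have hkn : (π k : ℕ) ≠ n := fun h => by have := eq_maxPos_of_apply_eq π k h; omega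
  exact hπ ⟨i, ⟨maxPos π, by have := maxPos_le π; omega⟩, k,
    by rw [Fin.lt_def]; exact hi, by rw [Fin.lt_def]; exact hk,
    by rw [Fin.lt_def]; exact h1,
    by rw [Fin.lt_def, apply_maxPos]; have := (π k).isLt; omega⟩

lemma right_block_lt (k : Fin (n + 1)) (hk : maxPos π < (k : ℕ)) :
    (π k : ℕ) < n - maxPos π := by
  by_contra hcon
  push_neg at hcon
  set m := maxPos π with hmdef
  -- the positions of all values `≤ π k` are `> m`
  have key : ∀ v : ℕ, (hv : v < n + 1) → v ≤ (π k : ℕ) →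
      m < (π.symm ⟨v, hv⟩ : ℕ) := by
    intro v hv hvk
    set p := π.symm ⟨v, hv⟩ with hp
    have hπp : (π p : ℕ) = v := by rw [hp, Equiv.apply_symm_apply]
    rcases lt_trichotomy (p : ℕ) m with h | h | h
    · have := noCross π hπ p k h hk; omega
    · exfalso
      have hpm : p = ⟨m, by have := maxPos_le π; omega⟩ := Fin.ext h
      have hveq : (π p : ℕ) = n := by rw [hpm]; exact apply_maxPos π
      have hπkn : (π k : ℕ) = n := by have := (π k).isLt; omega
      have := eq_maxPos_of_apply_eq π k hπkn; omega
    · exact h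
  -- injection from Fin (π k + 1) into Fin (n - m)
  have hinj : Function.Injective (fun v : Fin ((π k : ℕ) + 1) =>
      (⟨(π.symm ⟨(v : ℕ), by have := (π k).isLt; omega⟩ : ℕ) - (m + 1), by
        have h1 := key (v : ℕ) (by have := (π k).isLt; omega) (by omega)
        have h2 := (π.symm ⟨(v : ℕ), by have := (π k).isLt; omega⟩).isLt
        omega⟩ : Fin (n - m))) := by
    intro v w hvw
    simp only [Fin.mk.injEq] at hvw
    have h1 := key (v : ℕ) (by have := (π k).isLt; omega) (by omega)
    have h2 := key (w : ℕ) (by have := (π k).isLt; omega) (by omega)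
    have : (π.symm ⟨(v : ℕ), by have := (π k).isLt; omega⟩ : ℕ) =
        (π.symm ⟨(w : ℕ), by have := (π k).isLt; omega⟩ : ℕ) := by omega
    have := π.symm.injective (Fin.ext this)
    simp only [Fin.mk.injEq] at this
    exact Fin.ext this
  have := Fintype.card_le_of_injective _ hinj
  simp only [Fintype.card_fin] at this
  omega

/-- the right-block permutation -/
def tau0 : Fin (n - maxPos π) → Fin (n - maxPos π) := fun k =>
  ⟨(π ⟨maxPos π + 1 + (k : ℕ), by have := k.isLt; have := maxPos_le π; omega⟩ : ℕ),
    right_block_lt π hπ _ (by simp; omega)⟩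

lemma tau0_injective : Function.Injective (tau0 π hπ) := by
  intro a b hab
  simp only [tau0, Fin.mk.injEq] at hab
  have := π.injective (Fin.ext hab)
  simp only [Fin.mk.injEq] at this
  exact Fin.ext (by omega)

lemma left_block_ge (i : Fin (n + 1)) (hi : (i : ℕ) < maxPos π) :
    n - maxPos π ≤ (π i : ℕ) := by
  by_contra hcon
  push_neg at hcon
  have hsurj := (Finite.injective_iff_surjective.mp (tau0_injective π hπ))
  obtain ⟨k, hk⟩ := hsurj ⟨(π i : ℕ), hcon⟩
  simp only [tau0, Fin.mk.injEq] at hk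
  have h2 := π.injective (Fin.ext hk)
  have h3 : maxPos π + 1 + (k : ℕ) = (i : ℕ) := congrArg Fin.val h2
  have := i.isLt
  omega

/-- the left-block permutation -/
def sigma0 : Fin (maxPos π) → Fin (maxPos π) := fun i =>
  ⟨(π ⟨(i : ℕ), by have := i.isLt; have := maxPos_le π; omega⟩ : ℕ) - (n - maxPos π), by
    have h1 := left_block_ge π hπ ⟨(i : ℕ), by have := i.isLt; have := maxPos_le π; omega⟩
      (by simpa using i.isLt)
    have h2 := (π ⟨(i : ℕ), by have := i.isLt; have := maxPos_le π; omega⟩).isLt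
    have h3 : (π ⟨(i : ℕ), by have := i.isLt; have := maxPos_le π; omega⟩ : ℕ) ≠ n := by
      intro h
      have := eq_maxPos_of_apply_eq π _ h
      simp at this
      have := i.isLt; omega
    have := maxPos_le π
    omega⟩

lemma sigma0_injective : Function.Injective (sigma0 π hπ) := by
  intro a b hab
  simp only [sigma0, Fin.mk.injEq] at hab
  have h1 := left_block_ge π hπ ⟨(a : ℕ), by have := a.isLt; have := maxPos_le π; omega⟩
    (by simpa using a.isLt)
  have h2 := left_block_ge π hπ ⟨(b : ℕ), by have := b.isLt; have := maxPos_le π; omega⟩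
    (by simpa using b.isLt)
  have : (π ⟨(a : ℕ), by have := a.isLt; have := maxPos_le π; omega⟩ : ℕ) =
      (π ⟨(b : ℕ), by have := b.isLt; have := maxPos_le π; omega⟩ : ℕ) := by omega
  have := π.injective (Fin.ext this)
  simp only [Fin.mk.injEq] at this
  exact Fin.ext this

noncomputable def sigmaPerm : Equiv.Perm (Fin (maxPos π)) :=
  Equiv.ofBijective _ ((Finite.injective_iff_bijective).mp (sigma0_injective π hπ))

noncomputable def tauPerm : Equiv.Perm (Fin (n - maxPos π)) :=
  Equiv.ofBijective _ ((Finite.injective_iff_bijective).mp (tau0_injective π hπ))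

lemma sigmaPerm_avoids : Avoids132 (sigmaPerm π hπ) := by
  rintro ⟨i, j, k, hij, hjk, h1, h2⟩
  rw [Fin.lt_def] at hij hjk h1 h2
  simp only [sigmaPerm, Equiv.ofBijective_apply, sigma0] at h1 h2
  have hm := maxPos_le π
  have gi := left_block_ge π hπ ⟨(i : ℕ), by have := i.isLt; omega⟩ (by simpa using i.isLt)
  have gj := left_block_ge π hπ ⟨(j : ℕ), by have := j.isLt; omega⟩ (by simpa using j.isLt)
  have gk := left_block_ge π hπ ⟨(k : ℕ), by have := k.isLt; omega⟩ (by simpa using k.isLt)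
  exact hπ ⟨⟨(i : ℕ), by have := i.isLt; omega⟩, ⟨(j : ℕ), by have := j.isLt; omega⟩,
    ⟨(k : ℕ), by have := k.isLt; omega⟩,
    by rw [Fin.lt_def]; exact hij, by rw [Fin.lt_def]; exact hjk,
    by rw [Fin.lt_def]; omega, by rw [Fin.lt_def]; omega⟩

lemma tauPerm_avoids : Avoids132 (tauPerm π hπ) := by
  rintro ⟨i, j, k, hij, hjk, h1, h2⟩
  rw [Fin.lt_def] at hij hjk h1 h2
  simp only [tauPerm, Equiv.ofBijective_apply, tau0] at h1 h2
  have hm := maxPos_le π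
  exact hπ ⟨⟨maxPos π + 1 + (i : ℕ), by have := i.isLt; omega⟩,
    ⟨maxPos π + 1 + (j : ℕ), by have := j.isLt; omega⟩,
    ⟨maxPos π + 1 + (k : ℕ), by have := k.isLt; omega⟩,
    by rw [Fin.lt_def]; simp; omega, by rw [Fin.lt_def]; simp; omega,
    by rw [Fin.lt_def]; exact h1, by rw [Fin.lt_def]; exact h2⟩

lemma splice_split : splicePerm (maxPos_le π) (sigmaPerm π hπ) (tauPerm π hπ) = π := by
  apply Equiv.ext
  intro p
  apply Fin.ext
  have hm := maxPos_le π
  rcases lt_trichotomy (p : ℕ) (maxPos π) with h | h | h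
  · rw [splice_val_lt _ _ _ p h]
    simp only [sigmaPerm, Equiv.ofBijective_apply, sigma0]
    have hge := left_block_ge π hπ ⟨(p : ℕ), by omega⟩ (by simpa using h)
    have : (⟨(p : ℕ), by omega⟩ : Fin (n + 1)) = p := Fin.ext rfl
    rw [this] at hge ⊢
    omega
  · rw [splice_val_eq _ _ _ p h]
    have : p = ⟨maxPos π, by omega⟩ := Fin.ext h
    rw [this, apply_maxPos]
  · have hb : (p : ℕ) - (maxPos π + 1) < n - maxPos π := by have := p.isLt; omega
    rw [splice_val_gt _ _ _ p h hb]
    simp only [tauPerm, Equiv.ofBijective_apply, tau0]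
    have hpp : (⟨maxPos π + 1 + ((p : ℕ) - (maxPos π + 1)),
        by have := p.isLt; have := maxPos_le π; omega⟩ : Fin (n + 1)) = p :=
      Fin.ext (show maxPos π + 1 + ((p : ℕ) - (maxPos π + 1)) = (p : ℕ) by omega)
    exact congrArg (fun x => ((π x : Fin (n + 1)) : ℕ)) hpp

end Split

noncomputable def spliceSig (n : ℕ)
    (x : Σ m : Fin (n + 1), {σ : Equiv.Perm (Fin (m : ℕ)) // Avoids132 σ} ×
      {τ : Equiv.Perm (Fin (n - (m : ℕ))) // Avoids132 τ}) :
    {π : Equiv.Perm (Fin (n + 1)) // Avoids132 π} :=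
  ⟨splicePerm (by have := x.1.isLt; omega) x.2.1.1 x.2.2.1,
    splice_avoids _ x.2.1.1 x.2.2.1 x.2.1.2 x.2.2.2⟩

lemma spliceSig_bijective (n : ℕ) : Function.Bijective (spliceSig n) := by
  constructor
  · rintro ⟨m, ⟨σ, hσ⟩, ⟨τ, hτ⟩⟩ ⟨m', ⟨σ', hσ'⟩, ⟨τ', hτ'⟩⟩ h
    simp only [spliceSig, Subtype.mk.injEq] at h
    have hm : (m : ℕ) ≤ n := by have := m.isLt; omega
    have hm' : (m' : ℕ) ≤ n := by have := m'.isLt; omega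
    have hmm : (m : ℕ) = (m' : ℕ) := by
      by_contra hne
      have hv := congrArg (fun e : Equiv.Perm (Fin (n + 1)) =>
        ((e ⟨(m : ℕ), m.isLt⟩ : Fin (n + 1)) : ℕ)) h
      rw [splice_val_eq _ _ _ _ rfl] at hv
      rcases Nat.lt_or_ge (m : ℕ) (m' : ℕ) with hlt | hge
      · rw [splice_val_lt _ _ _ _ hlt] at hv
        have := (σ' ⟨(m : ℕ), hlt⟩).isLt
        omega
      · have hgt : (m' : ℕ) < (m : ℕ) := by omega
        have hlt2 := splice_val_gt_lt (hm') σ' τ' ⟨(m : ℕ), m.isLt⟩ hgt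
        omega
    obtain rfl : m = m' := Fin.ext hmm
    refine Sigma.ext rfl ?_
    simp only [heq_eq_eq, Prod.mk.injEq, Subtype.mk.injEq]
    constructor
    · apply Equiv.ext
      intro i
      have hil : ((⟨(i : ℕ), by have := i.isLt; omega⟩ : Fin (n + 1)) : ℕ) < (m : ℕ) := i.isLt
      have hv := congrArg (fun e : Equiv.Perm (Fin (n + 1)) =>
        ((e ⟨(i : ℕ), by have := i.isLt; omega⟩ : Fin (n + 1)) : ℕ)) h
      rw [splice_val_lt _ _ _ _ hil, splice_val_lt _ _ _ _ hil] at hv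
      have harg : (⟨((⟨(i : ℕ), by have := i.isLt; omega⟩ : Fin (n + 1)) : ℕ), hil⟩ :
          Fin (m : ℕ)) = i := Fin.ext rfl
      rw [harg] at hv
      exact Fin.ext (by omega)
    · apply Equiv.ext
      intro i
      have hpos : ((m : ℕ) + 1 + (i : ℕ)) < n + 1 := by have := i.isLt; omega
      have hig : (m : ℕ) < ((⟨(m : ℕ) + 1 + (i : ℕ), hpos⟩ : Fin (n + 1)) : ℕ) := by
        simp; omega
      have hb : ((⟨(m : ℕ) + 1 + (i : ℕ), hpos⟩ : Fin (n + 1)) : ℕ) - ((m : ℕ) + 1) <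
          n - (m : ℕ) := by have := i.isLt; simp
      have hv := congrArg (fun e : Equiv.Perm (Fin (n + 1)) =>
        ((e ⟨(m : ℕ) + 1 + (i : ℕ), hpos⟩ : Fin (n + 1)) : ℕ)) h
      rw [splice_val_gt _ _ _ _ hig hb, splice_val_gt _ _ _ _ hig hb] at hv
      have harg : (⟨((⟨(m : ℕ) + 1 + (i : ℕ), hpos⟩ : Fin (n + 1)) : ℕ) - ((m : ℕ) + 1), hb⟩ :
          Fin (n - (m : ℕ))) = i := Fin.ext (by simp)
      rw [harg] at hv
      exact Fin.ext (by omega)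
  · rintro ⟨π, hπ⟩
    refine ⟨⟨⟨maxPos π, by have := maxPos_le π; omega⟩,
      ⟨sigmaPerm π hπ, sigmaPerm_avoids π hπ⟩, ⟨tauPerm π hπ, tauPerm_avoids π hπ⟩⟩, ?_⟩
    exact Subtype.ext (splice_split π hπ)

end Av132

theorem count_avoiding_132_eq_catalan (n : ℕ) :
    Nat.card {π : Equiv.Perm (Fin n) // Avoids132 π} = catalan n := by
  induction n using Nat.strong_induction_on with
  | _ n ih =>
    match n with
    | 0 =>
      haveI : Unique {π : Equiv.Perm (Fin 0) // Avoids132 π} :=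
        { default := ⟨1, fun ⟨i, _⟩ => i.elim0⟩
          uniq := fun ⟨π, h⟩ => Subtype.ext (Equiv.ext fun i => i.elim0) }
      rw [Nat.card_unique, catalan_zero]
    | (k + 1) =>
      classical
      rw [← Nat.card_eq_of_bijective _ (Av132.spliceSig_bijective k)]
      rw [Nat.card_eq_fintype_card, Fintype.card_sigma, catalan_succ]
      apply Finset.sum_congr rfl
      intro i _
      rw [Fintype.card_prod, ← Nat.card_eq_fintype_card, ← Nat.card_eq_fintype_card,
        ih (i : ℕ) (by have := i.isLt; omega), ih (k - (i : ℕ)) (by omega)]
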